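/- arXiv:2402.10240 — 2 statements merged into one kernel-verified Lean document; each statement's English description precedes it below -/
import Mathlib

section
/- (Value Lemma, discrete-time form for reachability.) The reachability satisfies the Bellman optimality recursion: Λ 0 s = (if s ∈ B then 1 else 0) for every state s, and for every n : ℕ and every state s, Λ (n+1) s = (if s ∈ B then 1 else (the maximum over actions a ∈ A of ∑ s', (p s a s').toReal * Λ n s')). In particular, s ↦ Λ n s is the optimal n-step value function of the MDP whose reward is +1 upon entering B and 0 otherwise. -/
open scoped BigOperators

/-- Shift of a policy: `(shift π) k = π (k+1)`. -/
def shiftPolicy {S A : Type*} (π : ℕ → S → A) : ℕ → S → A := fun k => π (k + 1)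

/-- Hitting probability of `B` within `n` steps from state `s` under policy `π`:
`h π 0 s = (if s ∈ B then 1 else 0)` and
`h π (n+1) s = (if s ∈ B then 1 else ∑ s', (p s (π 0 s) s').toReal * h (shift π) n s')`. -/
noncomputable def hitProb {S A : Type*} [Fintype S]
    (p : S → A → PMF S) (B : Set S) [DecidablePred (· ∈ B)] :
    (ℕ → S → A) → ℕ → S → ℝ
  | _, 0, s => if s ∈ B then 1 else 0
  | π, n + 1, s =>
      if s ∈ B then 1
      else ∑ s', (p s (π 0 s) s').toReal * hitProb p B (shiftPolicy π) n s'

/-- Grit: the infimum over all policies of the hitting probability of `B`. -/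
noncomputable def grit {S A : Type*} [Fintype S]
    (p : S → A → PMF S) (B : Set S) [DecidablePred (· ∈ B)] (n : ℕ) (s : S) : ℝ :=
  ⨅ π : ℕ → S → A, hitProb p B π n s

/-- Reachability: the supremum over all policies of the hitting probability of `B`. -/
noncomputable def reach {S A : Type*} [Fintype S]
    (p : S → A → PMF S) (B : Set S) [DecidablePred (· ∈ B)] (n : ℕ) (s : S) : ℝ :=
  ⨆ π : ℕ → S → A, hitProb p B π n s

section Aux

variable {S A : Type*} [Fintype S] (p : S → A → PMF S) (B : Set S) [DecidablePred (· ∈ B)]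

lemma sum_toReal_eq_one (s : S) (a : A) : ∑ s', (p s a s').toReal = 1 := by
  rw [← ENNReal.toReal_sum (fun _ _ => (p s a).apply_ne_top _)]
  rw [← tsum_fintype (L := SummationFilter.unconditional _), (p s a).tsum_coe, ENNReal.toReal_one]

lemma hitProb_nonneg (π : ℕ → S → A) (n : ℕ) (s : S) : 0 ≤ hitProb p B π n s := by
  induction n generalizing π s with
  | zero => simp only [hitProb]; split <;> norm_num
  | succ n ih =>
    simp only [hitProb]
    split
    · norm_num
    · exact Finset.sum_nonneg fun s' _ =>
        mul_nonneg ENNReal.toReal_nonneg (ih _ _)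

lemma hitProb_le_one (π : ℕ → S → A) (n : ℕ) (s : S) : hitProb p B π n s ≤ 1 := by
  induction n generalizing π s with
  | zero => simp only [hitProb]; split <;> norm_num
  | succ n ih =>
    simp only [hitProb]
    split
    · norm_num
    · calc ∑ s', (p s (π 0 s) s').toReal * hitProb p B (shiftPolicy π) n s'
          ≤ ∑ s', (p s (π 0 s) s').toReal * 1 :=
            Finset.sum_le_sum fun s' _ =>
              mul_le_mul_of_nonneg_left (ih _ _) ENNReal.toReal_nonneg
        _ = 1 := by simp [sum_toReal_eq_one p s (π 0 s)]

lemma bdd_hitProb (n : ℕ) (s : S) :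
    BddAbove (Set.range fun π : ℕ → S → A => hitProb p B π n s) :=
  ⟨1, by rintro x ⟨π, rfl⟩; exact hitProb_le_one p B π n s⟩

lemma hitProb_le_reach (π : ℕ → S → A) (n : ℕ) (s : S) :
    hitProb p B π n s ≤ reach p B n s :=
  le_ciSup (bdd_hitProb p B n s) π

lemma reach_le_one [Nonempty A] (n : ℕ) (s : S) : reach p B n s ≤ 1 :=
  ciSup_le fun π => hitProb_le_one p B π n s

end Aux

/-- **Value Lemma, discrete-time form for reachability.**  The reachability satisfies the
Bellman optimality recursion: `Λ 0 s = (if s ∈ B then 1 else 0)` and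
`Λ (n+1) s = (if s ∈ B then 1 else ⨆ a, ∑ s', (p s a s').toReal * Λ n s')`, so that
`s ↦ Λ n s` is the optimal `n`-step value function of the MDP with reward `+1` upon
entering `B` and `0` otherwise. -/
theorem reach_bellman {S A : Type*} [Fintype S] [Nonempty S] [Fintype A] [Nonempty A]
    (p : S → A → PMF S) (B : Set S) [DecidablePred (· ∈ B)] :
    (∀ s : S, reach p B 0 s = if s ∈ B then 1 else 0) ∧
    (∀ (n : ℕ) (s : S), reach p B (n + 1) s =
      if s ∈ B then 1
      else ⨆ a : A, ∑ s', (p s a s').toReal * reach p B n s') := by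
  classical
  -- base case
  have hbase : ∀ s : S, reach p B 0 s = if s ∈ B then 1 else 0 := by
    intro s
    have : ∀ π : ℕ → S → A, hitProb p B π 0 s = if s ∈ B then 1 else 0 := fun π => rfl
    simp only [reach, this, ciSup_const]
  -- main induction: optimal policy exists and reach equals hitProb on it
  have main : ∀ n : ℕ, ∃ σ : ℕ → S → A, ∀ s, hitProb p B σ n s = reach p B n s := by
    intro n
    induction n with
    | zero =>
      refine ⟨fun _ _ => Classical.arbitrary A, fun s => ?_⟩
      rw [hbase s]; rfl
    | succ n ih =>
      obtain ⟨σ, hσ⟩ := ih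
      -- choose optimal action for each state
      have hact : ∀ s : S, ∃ a : A, ∀ b : A,
          ∑ s', (p s b s').toReal * reach p B n s' ≤
          ∑ s', (p s a s').toReal * reach p B n s' := fun s =>
        Finite.exists_max _
      choose astar hastar using hact
      set τ : ℕ → S → A := fun k => Nat.casesOn k astar (fun m => σ m) with hτ
      have hshift : shiftPolicy τ = σ := rfl
      -- upper bound for all policies
      have hub : ∀ (π : ℕ → S → A) (s : S), hitProb p B π (n+1) s ≤
          if s ∈ B then 1 else ∑ s', (p s (astar s) s').toReal * reach p B n s' := by
        intro π s
        simp only [hitProb]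
        split
        · exact le_refl 1
        · calc ∑ s', (p s (π 0 s) s').toReal * hitProb p B (shiftPolicy π) n s'
              ≤ ∑ s', (p s (π 0 s) s').toReal * reach p B n s' :=
                Finset.sum_le_sum fun s' _ =>
                  mul_le_mul_of_nonneg_left (hitProb_le_reach p B _ n s')
                    ENNReal.toReal_nonneg
            _ ≤ _ := hastar s (π 0 s)
      have hτval : ∀ s : S, hitProb p B τ (n+1) s =
          if s ∈ B then 1 else ∑ s', (p s (astar s) s').toReal * reach p B n s' := by
        intro s
        simp only [hitProb, hshift]
        split
        · rfl
        · exact Finset.sum_congr rfl fun s' _ => by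
            show (p s (astar s) s').toReal * hitProb p B σ n s' = _
            rw [hσ s']
      refine ⟨τ, fun s => le_antisymm (hitProb_le_reach p B τ _ s) ?_⟩
      exact (ciSup_le fun π => hub π s).trans (le_of_eq (hτval s).symm)
  refine ⟨hbase, fun n s => ?_⟩
  -- redo the optimal-action and upper-bound argument at level n+1
  obtain ⟨σ, hσ⟩ := main n
  obtain ⟨a0, ha0⟩ : ∃ a : A, ∀ b : A,
      ∑ s', (p s b s').toReal * reach p B n s' ≤
      ∑ s', (p s a s').toReal * reach p B n s' := Finite.exists_max _
  have hbddA : BddAbove (Set.range fun a : A =>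
      ∑ s', (p s a s').toReal * reach p B n s') :=
    (Set.finite_range _).bddAbove
  have hsupA : (⨆ a : A, ∑ s', (p s a s').toReal * reach p B n s') =
      ∑ s', (p s a0 s').toReal * reach p B n s' :=
    le_antisymm (ciSup_le ha0) (le_ciSup hbddA a0)
  by_cases hs : s ∈ B
  · simp only [hs, if_true]
    refine le_antisymm (reach_le_one p B _ s) ?_
    have : hitProb p B σ (n+1) s = 1 := by simp [hitProb, hs]
    exact this ▸ hitProb_le_reach p B σ (n+1) s
  · simp only [hs, if_false, hsupA]
    -- τ : play a0 then σ
    set τ : ℕ → S → A := fun k => Nat.casesOn k (fun _ => a0) (fun m => σ m) with hτ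
    have hτval : hitProb p B τ (n+1) s = ∑ s', (p s a0 s').toReal * reach p B n s' := by
      simp only [hitProb, hs, if_false]
      exact Finset.sum_congr rfl fun s' _ => by
        show (p s a0 s').toReal * hitProb p B σ n s' = _
        rw [hσ s']
    refine le_antisymm (ciSup_le fun π => ?_) (hτval ▸ hitProb_le_reach p B τ _ s)
    simp only [hitProb, hs, if_false]
    calc ∑ s', (p s (π 0 s) s').toReal * hitProb p B (shiftPolicy π) n s'
        ≤ ∑ s', (p s (π 0 s) s').toReal * reach p B n s' :=
          Finset.sum_le_sum fun s' _ =>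
            mul_le_mul_of_nonneg_left (hitProb_le_reach p B _ n s')
              ENNReal.toReal_nonneg
      _ ≤ _ := ha0 (π 0 s)
end

section
/- (Unity Proposition, discrete-time form.) (a) For every n : ℕ and every state s, Γ n s = 1 if and only if h π n s = 1 for every policy π; that is, grit equals one at s exactly when B occurs within n steps with probability one regardless of future actions and stochasticity. (b) If s ∉ B and Γ (n+1) s = 1, then for every action a and every state s' in the support of p s a, one has Γ n s' = 1; that is, once grit reaches unity it remains at unity with probability one under every action until B occurs. -/
open scoped BigOperators

section Aux
variable {S A : Type*} [Fintype S] (p : S → A → PMF S) (B : Set S) [DecidablePred (· ∈ B)]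

lemma toReal_sum_one (s : S) (a : A) : ∑ s', ((p s a) s').toReal = 1 := by
  rw [← ENNReal.toReal_sum (fun i _ => (p s a).apply_ne_top i)]
  rw [← tsum_fintype (L := SummationFilter.unconditional _)]
  rw [(p s a).tsum_coe]
  simp

lemma hit_nonneg : ∀ (n : ℕ) (π : ℕ → S → A) (s : S), 0 ≤ hitProb p B π n s := by
  intro n
  induction n with
  | zero => intro π s; simp [hitProb]; positivity
  | succ n ih =>
    intro π s
    rw [hitProb]
    split
    · norm_num
    · exact Finset.sum_nonneg fun i _ => mul_nonneg ENNReal.toReal_nonneg (ih _ i)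

lemma hit_le_one : ∀ (n : ℕ) (π : ℕ → S → A) (s : S), hitProb p B π n s ≤ 1 := by
  intro n
  induction n with
  | zero => intro π s; simp [hitProb]; split <;> norm_num
  | succ n ih =>
    intro π s
    rw [hitProb]
    split
    · exact le_refl 1
    · calc ∑ s', ((p s (π 0 s)) s').toReal * hitProb p B (shiftPolicy π) n s'
          ≤ ∑ s', ((p s (π 0 s)) s').toReal * 1 :=
            Finset.sum_le_sum fun i _ =>
              mul_le_mul_of_nonneg_left (ih _ i) ENNReal.toReal_nonneg
        _ = 1 := by simp [toReal_sum_one p s (π 0 s)]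

lemma grit_bdd (n : ℕ) (s : S) :
    BddBelow (Set.range fun π : ℕ → S → A => hitProb p B π n s) :=
  ⟨0, by rintro x ⟨π, rfl⟩; exact hit_nonneg p B n π s⟩

end Aux

/-- **Unity Proposition, discrete-time form.**
(a) `Γ n s = 1` iff `h π n s = 1` for every policy `π`: grit equals one at `s` exactly when
`B` occurs within `n` steps with probability one regardless of future actions and stochasticity.
(b) If `s ∉ B` and `Γ (n+1) s = 1`, then for every action `a` and every state `s'` in the
support of `p s a`, `Γ n s' = 1`: once grit reaches unity it remains at unity with probability
one under every action until `B` occurs. -/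
theorem unity_proposition {S A : Type*} [Fintype S] [Nonempty S] [Fintype A] [Nonempty A]
    (p : S → A → PMF S) (B : Set S) [DecidablePred (· ∈ B)] :
    (∀ (n : ℕ) (s : S), grit p B n s = 1 ↔ ∀ π : ℕ → S → A, hitProb p B π n s = 1) ∧
    (∀ (n : ℕ) (s : S), s ∉ B → grit p B (n + 1) s = 1 →
      ∀ (a : A), ∀ s' ∈ (p s a).support, grit p B n s' = 1) := by
  have ha : ∀ (n : ℕ) (s : S), grit p B n s = 1 ↔ ∀ π : ℕ → S → A, hitProb p B π n s = 1 := by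
    intro n s
    constructor
    · intro hg π
      have h1 : grit p B n s ≤ hitProb p B π n s := ciInf_le (grit_bdd p B n s) π
      rw [hg] at h1
      exact le_antisymm (hit_le_one p B n π s) h1
    · intro hall
      have : (fun π : ℕ → S → A => hitProb p B π n s) = fun _ => (1 : ℝ) :=
        funext hall
      rw [grit, this, ciInf_const]
  refine ⟨ha, ?_⟩
  intro n s hs hg a s' hs'
  rw [ha]
  intro π
  set σ : ℕ → S → A := fun k => Nat.rec (fun _ => a) (fun k _ => π k) k with hσ
  have hshift : shiftPolicy σ = π := funext fun k => rfl
  have hval : hitProb p B σ (n + 1) s = 1 := (ha (n + 1) s).mp hg σ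
  rw [hitProb, if_neg hs, hshift] at hval
  -- hval : ∑ s'', (p s a s'').toReal * hitProb p B π n s'' = 1  (σ 0 s = a)
  have hσ0 : σ 0 s = a := rfl
  rw [hσ0] at hval
  set w : S → ℝ := fun i => ((p s a) i).toReal with hw
  set f : S → ℝ := fun i => hitProb p B π n i with hf
  have hzero : ∑ i, w i * (1 - f i) = 0 := by
    have := toReal_sum_one p s a
    rw [Finset.sum_congr rfl (fun i _ => mul_one_sub (w i) (f i)),
      Finset.sum_sub_distrib, hval, this]
    ring
  have hterm : ∀ i ∈ Finset.univ, w i * (1 - f i) = 0 := by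
    rw [← Finset.sum_eq_zero_iff_of_nonneg]
    · exact hzero
    · intro i _
      exact mul_nonneg ENNReal.toReal_nonneg (sub_nonneg.mpr (hit_le_one p B n π i))
  have hwpos : w s' ≠ 0 := by
    simp only [hw, ENNReal.toReal_ne_zero]
    exact ⟨(PMF.mem_support_iff _ _).mp hs', (p s a).apply_ne_top s'⟩
  have := hterm s' (Finset.mem_univ s')
  rcases mul_eq_zero.mp this with h | h
  · exact absurd h hwpos
  · linarith [sub_eq_zero.mp h]
end
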